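/- An interval game (N,w) is selection convex if and only if for all coalitions T₁, T₂ ⊆ N and every player i ∈ N with T₁ a proper subset of T₂ and T₂ ⊆ N \ {i}, one has w̄(T₁ ∪ {i}) − w̲(T₁) ≤ w̲(T₂ ∪ {i}) − w̄(T₂). -/

import Mathlib

/-- `v` is a selection of the interval game with lower bounds `wl` and upper bounds `wu`. -/
def IsSelection {n : ℕ} (wl wu v : Finset (Fin n) → ℝ) : Prop :=
  ∀ S : Finset (Fin n), wl S ≤ v S ∧ v S ≤ wu S

/-- A classical cooperative game is convex (supermodular). -/
def ConvexGame {n : ℕ} (v : Finset (Fin n) → ℝ) : Prop :=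
  ∀ S T : Finset (Fin n), v S + v T ≤ v (S ∪ T) + v (S ∩ T)

/-- An interval game is selection convex iff
`w̄(T₁ ∪ {i}) − w̲(T₁) ≤ w̲(T₂ ∪ {i}) − w̄(T₂)` whenever `T₁ ⊊ T₂ ⊆ N \ {i}`. -/
theorem selection_convex_iff_single_marginal {n : ℕ} (wl wu : Finset (Fin n) → ℝ)
    (hw : ∀ S, wl S ≤ wu S) (hl0 : wl ∅ = 0) (hu0 : wu ∅ = 0) :
    (∀ v : Finset (Fin n) → ℝ, IsSelection wl wu v → ConvexGame v) ↔
      (∀ (T₁ T₂ : Finset (Fin n)) (i : Fin n), T₁ ⊂ T₂ → T₂ ⊆ Finset.univ \ {i} →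
        wu (T₁ ∪ {i}) - wl T₁ ≤ wl (T₂ ∪ {i}) - wu T₂) := by
  constructor
  · intro hconv T₁ T₂ i hss hsub
    have hiT2 : i ∉ T₂ := fun h => by
      have := hsub h; simp at this
    have hT1T2 : T₁ ⊆ T₂ := hss.subset
    have hiT1 : i ∉ T₁ := fun h => hiT2 (hT1T2 h)
    set v : Finset (Fin n) → ℝ := fun S => if S = T₁ ∪ {i} ∨ S = T₂ then wu S else wl S with hv
    have hsel : IsSelection wl wu v := by
      intro S
      by_cases h : S = T₁ ∪ {i} ∨ S = T₂ <;> simp only [hv, h, if_true, if_false, ↓reduceIte] <;> simp [hw S]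
    have hconv' := hconv v hsel (T₁ ∪ {i}) T₂
    have hun : (T₁ ∪ {i}) ∪ T₂ = T₂ ∪ {i} := by
      ext x
      simp only [Finset.mem_union, Finset.mem_singleton]
      constructor
      · rintro ((h | h) | h)
        exacts [Or.inl (hT1T2 h), Or.inr h, Or.inl h]
      · rintro (h | h)
        exacts [Or.inr h, Or.inl (Or.inr h)]
    have hint : (T₁ ∪ {i}) ∩ T₂ = T₁ := by
      ext x
      simp only [Finset.mem_inter, Finset.mem_union, Finset.mem_singleton]
      constructor
      · rintro ⟨h | h, h2⟩
        · exact h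
        · exact absurd (h ▸ h2) hiT2
      · intro h; exact ⟨Or.inl h, hT1T2 h⟩
    have hv1 : v (T₁ ∪ {i}) = wu (T₁ ∪ {i}) := by simp [hv]
    have hv2 : v T₂ = wu T₂ := by simp [hv]
    have hv3 : v T₁ = wl T₁ := by
      have h1 : T₁ ≠ T₁ ∪ {i} := fun h => hiT1 (by rw [h]; simp)
      have h2 : T₁ ≠ T₂ := hss.ne
      simp only [hv, h1, h2, or_self, if_false, ↓reduceIte]
    have hv4 : v (T₂ ∪ {i}) = wl (T₂ ∪ {i}) := by
      have h1 : T₂ ∪ {i} ≠ T₁ ∪ {i} := by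
        intro h
        apply hss.not_subset
        intro x hx
        have hx' : x ∈ T₁ ∪ {i} := h ▸ Finset.mem_union_left _ hx
        rcases Finset.mem_union.mp hx' with h' | h'
        · exact h'
        · exact absurd (Finset.mem_singleton.mp h' ▸ hx) hiT2
      have h2 : T₂ ∪ {i} ≠ T₂ := fun h => hiT2 (by rw [← h]; simp)
      simp only [hv, h1, h2, or_self, if_false, ↓reduceIte]
    rw [hun, hint, hv1, hv2, hv3, hv4] at hconv'
    linarith
  · intro h v hsel
    have M : ∀ (A B : Finset (Fin n)) (i : Fin n), A ⊆ B → i ∉ B →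
        v (A ∪ {i}) - v A ≤ v (B ∪ {i}) - v B := by
      intro A B i hAB hiB
      by_cases heq : A = B
      · subst heq; linarith
      · have hss : A ⊂ B := Finset.ssubset_iff_subset_ne.mpr ⟨hAB, heq⟩
        have hBsub : B ⊆ Finset.univ \ {i} := fun x hx =>
          Finset.mem_sdiff.mpr ⟨Finset.mem_univ x,
            fun hxi => hiB (Finset.mem_singleton.mp hxi ▸ hx)⟩
        have hkey := h A B i hss hBsub
        have h1 := (hsel (A ∪ {i})).2
        have h2 := (hsel A).1
        have h3 := (hsel (B ∪ {i})).1
        have h4 := (hsel B).2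
        linarith
    have key : ∀ k (S T : Finset (Fin n)), (S \ T).card = k →
        v S + v T ≤ v (S ∪ T) + v (S ∩ T) := by
      intro k
      induction k with
      | zero =>
        intro S T hcard
        have hST : S ⊆ T := by
          rw [← Finset.sdiff_eq_empty_iff_subset]
          exact Finset.card_eq_zero.mp hcard
        rw [Finset.union_eq_right.mpr hST, Finset.inter_eq_left.mpr hST]
        linarith
      | succ k ih =>
        intro S T hcard
        obtain ⟨i, hi⟩ := Finset.card_pos.mp (by omega : 0 < (S \ T).card)
        have hiS : i ∈ S := (Finset.mem_sdiff.mp hi).1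
        have hiT : i ∉ T := (Finset.mem_sdiff.mp hi).2
        have hsd : S.erase i \ T = (S \ T).erase i := by
          ext x; simp only [Finset.mem_sdiff, Finset.mem_erase]; tauto
        have hcard' : (S.erase i \ T).card = k := by
          rw [hsd, Finset.card_erase_of_mem hi, hcard]; omega
        have hih := ih (S.erase i) T hcard'
        have hM := M (S.erase i) (S.erase i ∪ T) i Finset.subset_union_left
          (by simp [hiT])
        have e1 : S.erase i ∪ {i} = S := by
          ext x
          simp only [Finset.mem_union, Finset.mem_erase, Finset.mem_singleton]
          constructor
          · rintro (⟨_, hx⟩ | rfl) <;> [exact hx; exact hiS]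
          · intro hx
            by_cases hxi : x = i
            · exact Or.inr hxi
            · exact Or.inl ⟨hxi, hx⟩
        have e2 : (S.erase i ∪ T) ∪ {i} = S ∪ T := by
          ext x
          simp only [Finset.mem_union, Finset.mem_erase, Finset.mem_singleton]
          constructor
          · rintro ((⟨_, hx⟩ | hx) | rfl)
            exacts [Or.inl hx, Or.inr hx, Or.inl hiS]
          · rintro (hx | hx)
            · by_cases hxi : x = i
              · exact Or.inr hxi
              · exact Or.inl (Or.inl ⟨hxi, hx⟩)
            · exact Or.inl (Or.inr hx)
        have e3 : S.erase i ∩ T = S ∩ T := by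
          ext x
          simp only [Finset.mem_inter, Finset.mem_erase]
          constructor
          · rintro ⟨⟨_, hx⟩, hxT⟩; exact ⟨hx, hxT⟩
          · rintro ⟨hx, hxT⟩; exact ⟨⟨fun he => hiT (he ▸ hxT), hx⟩, hxT⟩
        rw [e1, e2] at hM
        rw [e3] at hih
        linarith
    intro S T
    exact key (S \ T).card S T rfl
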